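/- For every integer r ≥ 1 there exists N₀ such that the following holds for every integer N ≥ N₀ with gcd(N, (2r)!) = 1, every abelian group G of order N, and every integer m with 1 ≤ m ≤ N: if D = (d₁,…,d_m) is uniformly distributed on G^m, then Pr[ ∃ x ∈ G∖{0} : Σ_{i=1}^m Σ_{ℓ=−2r}^{2r} 1{ℓ·dᵢ = x} > 4·log N ] ≤ 1/N³. -/

import Mathlib

open Finset

lemma aux_pow_le_pow_mul_factorial (b : ℕ) : ∀ k : ℕ, b ^ k ≤ b ^ b * k.factorial := by
  intro k
  induction k with
  | zero =>
    rcases Nat.eq_zero_or_pos b with hb | hb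
    · simp [hb]
    · simpa using Nat.one_le_iff_ne_zero.2 (pow_ne_zero _ (by omega))
  | succ k ih =>
    rcases le_or_gt b (k + 1) with hb | hb
    · calc b ^ (k + 1) = b ^ k * b := by ring
        _ ≤ b ^ b * k.factorial * (k + 1) := Nat.mul_le_mul ih hb
        _ = b ^ b * (k + 1).factorial := by rw [Nat.factorial_succ]; ring
    · calc b ^ (k + 1) ≤ b ^ b := Nat.pow_le_pow_right (by omega) (by omega)
        _ ≤ b ^ b * (k + 1).factorial := Nat.le_mul_of_pos_right _ (Nat.factorial_pos _)

lemma aux_pow_le_factorial (B k : ℕ) (hB : 1 ≤ B) (hk : 2 * B ^ 2 ≤ k) :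
    B ^ k ≤ k.factorial := by
  have h1 : (B ^ 2) ^ k ≤ (B ^ 2) ^ (B ^ 2) * k.factorial :=
    aux_pow_le_pow_mul_factorial (B ^ 2) k
  have h2 : (B ^ 2) ^ k = B ^ (2 * B ^ 2) * B ^ (2 * k - 2 * B ^ 2) := by
    have h : 2 * B ^ 2 + (2 * k - 2 * B ^ 2) = 2 * k := by omega
    rw [← pow_add, h, pow_mul]
  have h3 : (B ^ 2) ^ (B ^ 2) = B ^ (2 * B ^ 2) := by rw [← pow_mul]
  rw [h2, h3] at h1
  have h4 : B ^ (2 * k - 2 * B ^ 2) ≤ k.factorial :=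
    Nat.le_of_mul_le_mul_left h1 (pow_pos hB _)
  calc B ^ k ≤ B ^ (2 * k - 2 * B ^ 2) := Nat.pow_le_pow_right hB (by omega)
    _ ≤ k.factorial := h4

lemma aux_zsmul_eq_zero {G : Type} [AddCommGroup G] [Fintype G] {N r : ℕ}
    (hcard : Fintype.card G = N) (hcop : Nat.Coprime N (Nat.factorial (2 * r)))
    {ℓ : ℤ} (hℓ : ℓ ∈ Finset.Icc (-(2 * r : ℤ)) (2 * r : ℤ)) (hℓ0 : ℓ ≠ 0)
    {g : G} (hg : ℓ • g = 0) : g = 0 := by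
  have hmem := Finset.mem_Icc.1 hℓ
  have habs : ℓ.natAbs ≤ 2 * r := by omega
  have hpos : 0 < ℓ.natAbs := Int.natAbs_pos.2 hℓ0
  have hdvd : ℓ.natAbs ∣ Nat.factorial (2 * r) := Nat.dvd_factorial hpos habs
  have hco : Nat.Coprime N ℓ.natAbs := Nat.Coprime.coprime_dvd_right hdvd hcop
  have h1 : (addOrderOf g : ℤ) ∣ ℓ := addOrderOf_dvd_iff_zsmul_eq_zero.2 hg
  have h2 : addOrderOf g ∣ ℓ.natAbs := by
    have := Int.natAbs_dvd_natAbs.2 h1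
    simpa using this
  have h3 : addOrderOf g ∣ N := hcard ▸ addOrderOf_dvd_card
  have h4 : addOrderOf g ∣ 1 := by
    have h5 := Nat.dvd_gcd h3 h2
    rwa [Nat.Coprime.gcd_eq_one hco] at h5
  exact AddMonoid.addOrderOf_eq_one_iff.1 (Nat.dvd_one.1 h4)

lemma aux_card_sdiff_Icc (r : ℕ) (hr : 1 ≤ r) :
    (Finset.Icc (-(2 * r : ℤ)) (2 * r : ℤ) \ {0}).card = 4 * r := by
  have hsub : ({0} : Finset ℤ) ⊆ Finset.Icc (-(2 * r : ℤ)) (2 * r : ℤ) := by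
    simp only [Finset.singleton_subset_iff, Finset.mem_Icc]
    constructor <;> [linarith [Int.natCast_nonneg r]; positivity]
  rw [Finset.card_sdiff_of_subset hsub, Int.card_Icc, Finset.card_singleton]
  omega

lemma aux_cardS {G : Type} [AddCommGroup G] [Fintype G] {N r : ℕ} (hr : 1 ≤ r)
    (hcard : Fintype.card G = N) (hcop : Nat.Coprime N (Nat.factorial (2 * r)))
    (x : G) (S : Finset G)
    (hS : ∀ d ∈ S, ∃ ℓ ∈ Finset.Icc (-(2 * r : ℤ)) (2 * r : ℤ), ℓ ≠ 0 ∧ ℓ • d = x) :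
    S.card ≤ 4 * r := by
  classical
  set f : G → ℤ := fun d =>
    if h : ∃ ℓ ∈ Finset.Icc (-(2 * r : ℤ)) (2 * r : ℤ), ℓ ≠ 0 ∧ ℓ • d = x
    then h.choose else 0 with hf
  have hspec : ∀ d ∈ S,
      f d ∈ Finset.Icc (-(2 * r : ℤ)) (2 * r : ℤ) ∧ f d ≠ 0 ∧ f d • d = x := by
    intro d hd
    have h := hS d hd
    rw [hf]
    simp only [dif_pos h]
    exact ⟨h.choose_spec.1, h.choose_spec.2.1, h.choose_spec.2.2⟩
  calc S.card ≤ (Finset.Icc (-(2 * r : ℤ)) (2 * r : ℤ) \ {0}).card := by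
        apply Finset.card_le_card_of_injOn f
        · intro d hd
          obtain ⟨h1, h2, _⟩ := hspec d hd
          rw [Finset.mem_coe, Finset.mem_sdiff, Finset.mem_singleton]
          exact ⟨h1, h2⟩
        · intro d hd d' hd' hdd
          obtain ⟨h1, h2, h3⟩ := hspec d (by simpa using hd)
          obtain ⟨h1', h2', h3'⟩ := hspec d' (by simpa using hd')
          rw [hdd] at h3
          have h6 : f d' • (d - d') = 0 := by rw [smul_sub, h3, h3', sub_self]
          have h7 := aux_zsmul_eq_zero hcard hcop h1' h2' h6
          exact sub_eq_zero.1 h7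
    _ = 4 * r := aux_card_sdiff_Icc r hr

/-- The set of `d` hit by some nonzero multiple landing on `x`. -/
noncomputable def auxA (r : ℕ) {G : Type} [AddCommGroup G] [Fintype G] [DecidableEq G] (x : G) : Finset G :=
  @Finset.filter G
    (fun d => ∃ ℓ ∈ Finset.Icc (-(2 * r : ℤ)) (2 * r : ℤ), ℓ ≠ 0 ∧ ℓ • d = x)
    (fun _ => by infer_instance) Finset.univ

lemma auxA_mem (r : ℕ) {G : Type} [AddCommGroup G] [Fintype G] [DecidableEq G] (x d : G) :
    d ∈ auxA r x ↔ ∃ ℓ ∈ Finset.Icc (-(2 * r : ℤ)) (2 * r : ℤ), ℓ ≠ 0 ∧ ℓ • d = x := by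
  simp only [auxA, Finset.mem_filter, Finset.mem_univ, true_and]

lemma auxA_card {G : Type} [AddCommGroup G] [Fintype G] [DecidableEq G] {N r : ℕ} (hr : 1 ≤ r)
    (hcard : Fintype.card G = N) (hcop : Nat.Coprime N (Nat.factorial (2 * r)))
    (x : G) : (auxA r x).card ≤ 4 * r :=
  aux_cardS hr hcard hcop x _ (fun d hd => (auxA_mem r x d).1 hd)

theorem multiplicity_chernoff (r : ℕ) (hr : 1 ≤ r) :
    ∃ N₀ : ℕ, ∀ N : ℕ, N₀ ≤ N → Nat.Coprime N (Nat.factorial (2 * r)) →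
      ∀ (G : Type) [AddCommGroup G] [Fintype G] [DecidableEq G], Fintype.card G = N →
        ∀ m : ℕ, 1 ≤ m → m ≤ N →
          (Nat.card {D : Fin m → G // ∃ x : G, x ≠ 0 ∧
              4 * Real.log N <
                ∑ i, ∑ ℓ ∈ Finset.Icc (-(2 * r : ℤ)) (2 * r : ℤ),
                  (if ℓ • D i = x then (1 : ℝ) else 0)} : ℝ) /
            (N : ℝ) ^ m ≤ 1 / (N : ℝ) ^ 3 := by
  classical
  set v : ℝ := (4 * r : ℝ) * Real.exp (4 * r) with hv
  set B : ℕ := ⌈v⌉₊ + 1 with hBdef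
  refine ⟨max 2 (⌈Real.exp (2 * r * B ^ 2)⌉₊ + 1), ?_⟩
  intro N hN hcop G _ _ _ hcard m hm1 hmN
  have hN2 : 2 ≤ N := le_trans (le_max_left _ _) hN
  have hNpos : (0 : ℝ) < N := by exact_mod_cast (by omega : 0 < N)
  have hNexp : Real.exp (2 * r * B ^ 2) ≤ N := by
    have h1 : (⌈Real.exp (2 * r * B ^ 2)⌉₊ : ℝ) ≤ N := by
      have h0 : ⌈Real.exp (2 * r * B ^ 2)⌉₊ ≤ N :=
        le_trans (by omega) (le_trans (le_max_right 2 _) hN)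
      exact_mod_cast h0
    exact le_trans (Nat.le_ceil _) h1
  have hlogN : (2 * r * B ^ 2 : ℝ) ≤ Real.log N := by
    rw [← Real.log_exp (2 * r * B ^ 2 : ℝ)]
    exact Real.log_le_log (Real.exp_pos _) hNexp
  have hrpos : (0 : ℝ) < r := by exact_mod_cast hr
  have hBpos : 1 ≤ B := by omega
  have hlog0 : 0 ≤ Real.log N := le_trans (by positivity) hlogN
  set k : ℕ := ⌊Real.log N / r⌋₊ + 1 with hkdef
  have hk1 : Real.log N / r < (k : ℝ) := by
    rw [hkdef]; push_cast; exact Nat.lt_floor_add_one _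
  have hk2 : 2 * B ^ 2 ≤ k := by
    have h1 : ((2 * B ^ 2 : ℕ) : ℝ) ≤ Real.log N / r := by
      rw [le_div_iff₀ hrpos]
      have e : ((2 * B ^ 2 : ℕ) : ℝ) * r = 2 * r * (B : ℝ) ^ 2 := by push_cast; ring
      rw [e]; exact hlogN
    have h2 := Nat.le_floor h1
    omega
  have hlogrk : Real.log N ≤ (r : ℝ) * k := by
    rw [div_lt_iff₀ hrpos] at hk1; nlinarith
  -- key: a bad D has at least k coordinates in auxA r x
  have hkey : ∀ D : Fin m → G, (∃ x : G, x ≠ 0 ∧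
      4 * Real.log N < ∑ i, ∑ ℓ ∈ Finset.Icc (-(2 * r : ℤ)) (2 * r : ℤ),
        (if ℓ • D i = x then (1 : ℝ) else 0)) →
      ∃ x : G, k ≤ (Finset.univ.filter fun i => D i ∈ auxA r x).card := by
    rintro D ⟨x, hx0, hxS⟩
    refine ⟨x, ?_⟩
    set F : ℕ := (Finset.univ.filter fun i => D i ∈ auxA r x).card with hF
    have hinner : ∀ i : Fin m,
        (∑ ℓ ∈ Finset.Icc (-(2 * r : ℤ)) (2 * r : ℤ), if ℓ • D i = x then (1 : ℝ) else 0)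
          ≤ (if D i ∈ auxA r x then (4 * r : ℝ) else 0) := by
      intro i
      by_cases hd : D i ∈ auxA r x
      · rw [if_pos hd, Finset.sum_boole]
        have hsub : (Finset.Icc (-(2 * r : ℤ)) (2 * r : ℤ)).filter (fun ℓ => ℓ • D i = x)
            ⊆ Finset.Icc (-(2 * r : ℤ)) (2 * r : ℤ) \ {0} := by
          intro ℓ hℓ
          rw [Finset.mem_filter] at hℓ
          rw [Finset.mem_sdiff, Finset.mem_singleton]
          refine ⟨hℓ.1, fun h0 => hx0 ?_⟩
          rw [h0, zero_smul] at hℓ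
          exact hℓ.2.symm
        have h8 := (Finset.card_le_card hsub).trans_eq (aux_card_sdiff_Icc r hr)
        exact_mod_cast h8
      · rw [if_neg hd]
        apply le_of_eq
        apply Finset.sum_eq_zero
        intro ℓ hℓ
        rw [if_neg]
        intro heq
        apply hd
        rw [auxA_mem]
        refine ⟨ℓ, hℓ, fun h0 => hx0 ?_, heq⟩
        rw [h0, zero_smul] at heq
        exact heq.symm
    have hSle : (∑ i, ∑ ℓ ∈ Finset.Icc (-(2 * r : ℤ)) (2 * r : ℤ),
        if ℓ • D i = x then (1 : ℝ) else 0) ≤ (4 * r : ℝ) * F := by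
      calc (∑ i, ∑ ℓ ∈ Finset.Icc (-(2 * r : ℤ)) (2 * r : ℤ),
          if ℓ • D i = x then (1 : ℝ) else 0)
          ≤ ∑ i : Fin m, (if D i ∈ auxA r x then (4 * r : ℝ) else 0) :=
            Finset.sum_le_sum fun i _ => hinner i
        _ = ∑ i ∈ Finset.univ.filter (fun i => D i ∈ auxA r x), (4 * r : ℝ) := by
            rw [Finset.sum_filter]
        _ = (4 * r : ℝ) * F := by rw [Finset.sum_const, hF, nsmul_eq_mul, mul_comm]
    have hlt : Real.log N / r < (F : ℝ) := by
      rw [div_lt_iff₀ hrpos]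
      nlinarith
    have h6 : ⌊Real.log N / r⌋₊ < F := by
      rw [Nat.floor_lt (by positivity)]
      exact hlt
    omega
  -- counting: per-x bound
  have hperx : ∀ x : G,
      (Finset.univ.filter fun D : Fin m → G =>
        k ≤ (Finset.univ.filter fun i => D i ∈ auxA r x).card).card
      ≤ m.choose k * ((4 * r) ^ k * N ^ (m - k)) := by
    intro x
    have hsub2 : (Finset.univ.filter fun D : Fin m → G =>
        k ≤ (Finset.univ.filter fun i => D i ∈ auxA r x).card)
        ⊆ (Finset.powersetCard k (Finset.univ : Finset (Fin m))).biUnion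
          (fun s => Fintype.piFinset fun i => if i ∈ s then auxA r x else Finset.univ) := by
      intro D hD
      rw [Finset.mem_filter] at hD
      obtain ⟨s, hs1, hs2⟩ := Finset.exists_subset_card_eq hD.2
      rw [Finset.mem_biUnion]
      refine ⟨s, ?_, ?_⟩
      · rw [Finset.mem_powersetCard]
        exact ⟨hs1.trans (Finset.filter_subset _ _), hs2⟩
      · rw [Fintype.mem_piFinset]
        intro i
        by_cases hi : i ∈ s
        · rw [if_pos hi]
          exact (Finset.mem_filter.1 (hs1 hi)).2
        · rw [if_neg hi]
          exact Finset.mem_univ _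
    refine le_trans (Finset.card_le_card hsub2) ?_
    have hbound : ∀ s ∈ Finset.powersetCard k (Finset.univ : Finset (Fin m)),
        (Fintype.piFinset fun i => if i ∈ s then auxA r x else Finset.univ).card
          ≤ (4 * r) ^ k * N ^ (m - k) := by
      intro s hs
      rw [Finset.mem_powersetCard] at hs
      rw [Fintype.card_piFinset]
      have hsplit : (∏ i : Fin m, (if i ∈ s then auxA r x else (Finset.univ : Finset G)).card)
          = (∏ i ∈ Finset.univ \ s, (if i ∈ s then auxA r x else (Finset.univ : Finset G)).card) *
            ∏ i ∈ s, (if i ∈ s then auxA r x else (Finset.univ : Finset G)).card :=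
        (Finset.prod_sdiff (Finset.subset_univ s)).symm
      have e1 : (∏ i ∈ s, (if i ∈ s then auxA r x else (Finset.univ : Finset G)).card)
          = (auxA r x).card ^ k := by
        rw [Finset.prod_congr rfl (fun i hi => by rw [if_pos hi]), Finset.prod_const, hs.2]
      have e2 : (∏ i ∈ Finset.univ \ s,
            (if i ∈ s then auxA r x else (Finset.univ : Finset G)).card)
          = N ^ (m - k) := by
        rw [Finset.prod_congr rfl (fun i hi => by rw [if_neg (Finset.mem_sdiff.1 hi).2]),
          Finset.prod_const, Finset.card_sdiff_of_subset (Finset.subset_univ s), hs.2,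
          Finset.card_univ, Finset.card_univ, hcard, Fintype.card_fin]
      rw [hsplit, e1, e2, mul_comm]
      exact Nat.mul_le_mul (Nat.pow_le_pow_left (auxA_card hr hcard hcop x) k) le_rfl
    refine le_trans (Finset.card_biUnion_le_card_mul _ _ _ hbound) ?_
    rw [Finset.card_powersetCard, Finset.card_univ, Fintype.card_fin]
  rw [Nat.card_eq_fintype_card, Fintype.card_subtype]
  set Bad : Finset (Fin m → G) := Finset.univ.filter (fun D : Fin m → G => ∃ x : G, x ≠ 0 ∧
      4 * Real.log N < ∑ i, ∑ ℓ ∈ Finset.Icc (-(2 * r : ℤ)) (2 * r : ℤ),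
        (if ℓ • D i = x then (1 : ℝ) else 0)) with hBad
  have htotal : Bad.card ≤ N * (m.choose k * ((4 * r) ^ k * N ^ (m - k))) := by
    have hsubset : Bad ⊆ (Finset.univ : Finset G).biUnion
        (fun x => Finset.univ.filter fun D : Fin m → G =>
          k ≤ (Finset.univ.filter fun i => D i ∈ auxA r x).card) := by
      intro D hD
      rw [hBad] at hD
      simp only [Finset.mem_filter, Finset.mem_univ, true_and] at hD
      obtain ⟨x, hx⟩ := hkey D hD
      rw [Finset.mem_biUnion]
      exact ⟨x, Finset.mem_univ _, Finset.mem_filter.2 ⟨Finset.mem_univ _, hx⟩⟩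
    refine le_trans (Finset.card_le_card hsubset) ?_
    refine le_trans (Finset.card_biUnion_le_card_mul _ _ _ fun x _ => hperx x) ?_
    rw [Finset.card_univ, hcard]
  rw [div_le_div_iff₀ (by positivity) (by positivity)]
  by_cases hkm : k ≤ m
  · have hCk : (m.choose k : ℝ) * (4 * r : ℝ) ^ k * (N : ℝ) ^ 4 ≤ (N : ℝ) ^ k := by
      have h1 : (N : ℝ) ^ 4 ≤ Real.exp ((4 * r : ℝ) * k) := by
        have e : (N : ℝ) ^ 4 = Real.exp (4 * Real.log N) := by
          rw [← Real.exp_log hNpos, ← Real.exp_nat_mul]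
          norm_num
        rw [e]
        apply Real.exp_le_exp.2
        nlinarith
      have hvB : (4 * r : ℝ) * Real.exp (4 * r : ℝ) ≤ (B : ℝ) := by
        calc (4 * r : ℝ) * Real.exp (4 * r : ℝ) ≤ (⌈v⌉₊ : ℝ) := Nat.le_ceil v
          _ ≤ (B : ℝ) := by rw [hBdef]; push_cast; linarith
      have h2 : (4 * r : ℝ) ^ k * Real.exp ((4 * r : ℝ) * k) ≤ (B : ℝ) ^ k := by
        have e : Real.exp ((4 * r : ℝ) * k) = Real.exp (4 * r : ℝ) ^ k := by
          rw [← Real.exp_nat_mul, mul_comm]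
        rw [e, ← mul_pow]
        exact pow_le_pow_left₀ (by positivity) hvB k
      have h3 : ((B : ℝ) ^ k : ℝ) ≤ (k.factorial : ℝ) := by
        exact_mod_cast aux_pow_le_factorial B k hBpos hk2
      have h4 : (m.choose k : ℝ) * (k.factorial : ℝ) ≤ (N : ℝ) ^ k := by
        have hn : m.choose k * k.factorial ≤ N ^ k := by
          calc m.choose k * k.factorial = k.factorial * m.choose k := by ring
            _ = m.descFactorial k := (Nat.descFactorial_eq_factorial_mul_choose m k).symm
            _ ≤ m ^ k := Nat.descFactorial_le_pow m k
            _ ≤ N ^ k := Nat.pow_le_pow_left hmN k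
        exact_mod_cast hn
      have hC0 : (0 : ℝ) ≤ (m.choose k : ℝ) := by positivity
      calc (m.choose k : ℝ) * (4 * r : ℝ) ^ k * (N : ℝ) ^ 4
          ≤ (m.choose k : ℝ) * ((4 * r : ℝ) ^ k * Real.exp ((4 * r : ℝ) * k)) := by
            rw [mul_assoc]
            exact mul_le_mul_of_nonneg_left
              (mul_le_mul_of_nonneg_left h1 (by positivity)) hC0
        _ ≤ (m.choose k : ℝ) * (B : ℝ) ^ k := mul_le_mul_of_nonneg_left h2 hC0
        _ ≤ (m.choose k : ℝ) * (k.factorial : ℝ) := mul_le_mul_of_nonneg_left h3 hC0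
        _ ≤ (N : ℝ) ^ k := h4
    have hcast : (Bad.card : ℝ) ≤ (N : ℝ) * ((m.choose k : ℝ) *
        ((4 * r : ℝ) ^ k * (N : ℝ) ^ (m - k))) := by
      exact_mod_cast htotal
    have hsplit : (N : ℝ) ^ m = (N : ℝ) ^ k * (N : ℝ) ^ (m - k) := by
      rw [← pow_add]
      congr 1
      omega
    calc (Bad.card : ℝ) * (N : ℝ) ^ 3
        ≤ ((N : ℝ) * ((m.choose k : ℝ) * ((4 * r : ℝ) ^ k * (N : ℝ) ^ (m - k)))) * (N : ℝ) ^ 3 :=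
          mul_le_mul_of_nonneg_right hcast (by positivity)
      _ = ((m.choose k : ℝ) * (4 * r : ℝ) ^ k * (N : ℝ) ^ 4) * (N : ℝ) ^ (m - k) := by ring
      _ ≤ (N : ℝ) ^ k * (N : ℝ) ^ (m - k) :=
          mul_le_mul_of_nonneg_right hCk (by positivity)
      _ = 1 * (N : ℝ) ^ m := by rw [hsplit]; ring
  · have hempty : Bad = ∅ := by
      rw [Finset.eq_empty_iff_forall_notMem]
      intro D hD
      rw [hBad] at hD
      simp only [Finset.mem_filter, Finset.mem_univ, true_and] at hD
      obtain ⟨x, hx⟩ := hkey D hD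
      have h9 : (Finset.univ.filter fun i => D i ∈ auxA r x).card ≤ m := by
        refine le_trans (Finset.card_le_card (Finset.subset_univ _)) ?_
        rw [Finset.card_univ, Fintype.card_fin]
      omega
    rw [hempty]
    simp only [Finset.card_empty, Nat.cast_zero, zero_mul]
    positivity
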